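/- Let U and Q be real normed vector spaces. Let m, a, b : U × U → ℝ and m_T, a_T : Q × Q → ℝ and c : U × Q → ℝ be continuous bilinear forms, with m, a, b and m_T symmetric. Assume there exist μ₀, μ₁ > 0 such that m(v, v) ≥ μ₀ ‖v‖²_U for all v ∈ U and m_T(S, S) ≥ μ₁ ‖S‖²_Q for all S ∈ Q, and that a, b and a_T are positive semidefinite. Let T_f > 0, let F : [0, T_f] → U* and H : [0, T_f] → Q* be continuous, and suppose X ∈ C²([0, T_f]; U) and Θ ∈ C¹([0, T_f]; Q) satisfy, for every t ∈ [0, T_f] and every (v, S) ∈ U × Q: m(Ẍ(t), v) + b(Ẋ(t), v) + m_T(Θ̇(t), S) + c(Ẋ(t), S) + a(X(t), v) + a_T(Θ(t), S) − c(v, Θ(t)) = F(t)(v) + H(t)(S). Define the energy norm ‖(X, Θ)(t)‖²_E = m(Ẋ(t), Ẋ(t)) + m_T(Θ(t), Θ(t)) + a(X(t), X(t)) + b(X(t), X(t)). Then there exists a constant C > 0, depending only on μ₀, μ₁ and T_f (and not on X, Θ, F, H), such that sup_{t ∈ [0, T_f]} ( ‖(X, Θ)(t)‖²_E + ∫₀ᵗ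 a_T(Θ(s), Θ(s)) ds )^{1/2} ≤ C ( ‖(X, Θ)(0)‖_E + ∫₀^{T_f} ( ‖F(s)‖_{U*} + ‖H(s)‖_{Q*} ) ds ). -/

import Mathlib

open Set

/-- Cauchy–Schwarz with parameter for a symmetric positive semidefinite bilinear form. -/
lemma aux_cs {U : Type*} [NormedAddCommGroup U] [NormedSpace ℝ U]
    (b : U →L[ℝ] U →L[ℝ] ℝ) (hsymm : ∀ x y : U, b x y = b y x)
    (hpos : ∀ v : U, 0 ≤ b v v) (lam : ℝ) (hlam : 0 < lam) (x y : U) :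
    2 * b x y ≤ lam * b x x + lam⁻¹ * b y y := by
  have h := hpos (lam • x - y)
  simp only [map_sub, map_smul, ContinuousLinearMap.sub_apply,
    ContinuousLinearMap.smul_apply, smul_eq_mul] at h
  have hb := hsymm x y
  have key : 2 * lam * b x y ≤ lam ^ 2 * b x x + b y y := by nlinarith
  have h2 := mul_le_mul_of_nonneg_left key (inv_pos.2 hlam).le
  have e1 : lam⁻¹ * (2 * lam * b x y) = 2 * b x y := by field_simp
  have e2 : lam⁻¹ * (lam ^ 2 * b x x + b y y) = lam * b x x + lam⁻¹ * b y y := by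
    field_simp
  linarith [e1 ▸ e2 ▸ h2]

lemma aux_quad (A G N : ℝ) (hA : 0 ≤ A) (hG : 0 ≤ G) (hN : 0 ≤ N)
    (h : N ^ 2 ≤ A + 2 * G * N) : N ≤ Real.sqrt A + 2 * G := by
  nlinarith [Real.sq_sqrt hA, Real.sqrt_nonneg A, sq_nonneg (N - Real.sqrt A)]

set_option maxHeartbeats 2000000 in
/-- Abstract stability estimate for the semi-discrete thermo-poroelastic
problem (τ = 0): there is a constant `C > 0` depending only on `μ₀, μ₁, T_f` such that for
any coercive mass forms, positive semidefinite stiffness/dissipation forms and any solution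
of the variational system,
`sup_t (‖(X,Θ)(t)‖²_E + ∫₀ᵗ a_T(Θ,Θ))^{1/2} ≤ C (‖(X,Θ)(0)‖_E + ∫₀^{T_f}(‖F‖ + ‖H‖))`. -/
theorem stmt_7 (μ₀ μ₁ Tf : ℝ) (hμ₀ : 0 < μ₀) (hμ₁ : 0 < μ₁) (hTf : 0 < Tf) :
    ∃ C > (0 : ℝ),
      ∀ (U : Type u) (Q : Type v), ∀ (_ : NormedAddCommGroup U) (_ : NormedSpace ℝ U)
        (_ : NormedAddCommGroup Q) (_ : NormedSpace ℝ Q),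
      ∀ (m a b : U →L[ℝ] U →L[ℝ] ℝ) (mT aT : Q →L[ℝ] Q →L[ℝ] ℝ) (c : U →L[ℝ] Q →L[ℝ] ℝ),
        (∀ x y : U, m x y = m y x) →
        (∀ x y : U, a x y = a y x) →
        (∀ x y : U, b x y = b y x) →
        (∀ x y : Q, mT x y = mT y x) →
        (∀ v : U, μ₀ * ‖v‖ ^ 2 ≤ m v v) →
        (∀ S : Q, μ₁ * ‖S‖ ^ 2 ≤ mT S S) →
        (∀ v : U, 0 ≤ a v v) →
        (∀ v : U, 0 ≤ b v v) →
        (∀ S : Q, 0 ≤ aT S S) →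
      ∀ (F : ℝ → (U →L[ℝ] ℝ)) (H : ℝ → (Q →L[ℝ] ℝ)),
        ContinuousOn F (Icc (0 : ℝ) Tf) → ContinuousOn H (Icc (0 : ℝ) Tf) →
      ∀ (X X' X'' : ℝ → U) (Θ Θ' : ℝ → Q),
        (∀ t ∈ Icc (0 : ℝ) Tf, HasDerivWithinAt X (X' t) (Icc (0 : ℝ) Tf) t) →
        (∀ t ∈ Icc (0 : ℝ) Tf, HasDerivWithinAt X' (X'' t) (Icc (0 : ℝ) Tf) t) →
        ContinuousOn X'' (Icc (0 : ℝ) Tf) →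
        (∀ t ∈ Icc (0 : ℝ) Tf, HasDerivWithinAt Θ (Θ' t) (Icc (0 : ℝ) Tf) t) →
        ContinuousOn Θ' (Icc (0 : ℝ) Tf) →
        (∀ t ∈ Icc (0 : ℝ) Tf, ∀ (v : U) (S : Q),
          m (X'' t) v + b (X' t) v + mT (Θ' t) S + c (X' t) S
            + a (X t) v + aT (Θ t) S - c v (Θ t) = F t v + H t S) →
      ∀ t ∈ Icc (0 : ℝ) Tf,
        Real.sqrt ((m (X' t) (X' t) + mT (Θ t) (Θ t) + a (X t) (X t) + b (X t) (X t))
              + ∫ s in (0 : ℝ)..t, aT (Θ s) (Θ s))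
          ≤ C * (Real.sqrt (m (X' 0) (X' 0) + mT (Θ 0) (Θ 0)
                  + a (X 0) (X 0) + b (X 0) (X 0))
              + ∫ s in (0 : ℝ)..Tf, (‖F s‖ + ‖H s‖)) := by
  have hcmax0 : (0:ℝ) ≤ max (Real.sqrt μ₀)⁻¹ (Real.sqrt μ₁)⁻¹ :=
    le_trans (inv_nonneg.2 (Real.sqrt_nonneg μ₀)) (le_max_left _ _)
  set cmax : ℝ := max (Real.sqrt μ₀)⁻¹ (Real.sqrt μ₁)⁻¹ with hcmax_def
  clear_value cmax
  have hCsq : (0:ℝ) < (1 + 2*Tf) * (1 + 2*cmax)^2 + 2 := by positivity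
  refine ⟨Real.sqrt ((1 + 2*Tf) * (1 + 2*cmax)^2 + 2), Real.sqrt_pos.2 hCsq, ?_⟩
  intro U Q _ _ _ _ m a b mT aT c hmsym hasym hbsym hmTsym hmco hmTco hapos hbpos haTpos
    F H hF hH X X' X'' Θ Θ' hX hX' hX''c hΘ hΘ'c hvar t ht
  have hTmem : Tf ∈ Icc (0:ℝ) Tf := ⟨hTf.le, le_rfl⟩
  have h0mem : (0:ℝ) ∈ Icc (0:ℝ) Tf := ⟨le_rfl, hTf.le⟩
  -- continuity of the basic functions
  have hXc : ContinuousOn X (Icc (0:ℝ) Tf) := fun s hs => (hX s hs).continuousWithinAt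
  have hX'c : ContinuousOn X' (Icc (0:ℝ) Tf) := fun s hs => (hX' s hs).continuousWithinAt
  have hΘc : ContinuousOn Θ (Icc (0:ℝ) Tf) := fun s hs => (hΘ s hs).continuousWithinAt
  -- the scalar functions
  set eE : ℝ → ℝ := fun r => m (X' r) (X' r) + mT (Θ r) (Θ r) + a (X r) (X r) with heEdef
  set βb : ℝ → ℝ := fun r => b (X r) (X r) with hβdef
  set D : ℝ → ℝ := fun r => b (X' r) (X' r) + aT (Θ r) (Θ r) with hDdef
  set P : ℝ → ℝ := fun r => F r (X' r) + H r (Θ r) with hPdef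
  set Pg : ℝ → ℝ := fun r => ‖F r‖ * (Real.sqrt μ₀)⁻¹ + ‖H r‖ * (Real.sqrt μ₁)⁻¹ with hPgdef
  clear_value eE βb D P Pg
  have heEc : ContinuousOn eE (Icc (0:ℝ) Tf) := by
    rw [heEdef]
    exact (((m.continuous.comp_continuousOn hX'c).clm_apply hX'c).add
      ((mT.continuous.comp_continuousOn hΘc).clm_apply hΘc)).add
      ((a.continuous.comp_continuousOn hXc).clm_apply hXc)
  have hβc : ContinuousOn βb (Icc (0:ℝ) Tf) := by
    rw [hβdef]
    exact (b.continuous.comp_continuousOn hXc).clm_apply hXc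
  have hDc : ContinuousOn D (Icc (0:ℝ) Tf) := by
    rw [hDdef]
    exact ((b.continuous.comp_continuousOn hX'c).clm_apply hX'c).add
      ((aT.continuous.comp_continuousOn hΘc).clm_apply hΘc)
  have hPc : ContinuousOn P (Icc (0:ℝ) Tf) := by
    rw [hPdef]
    exact (hF.clm_apply hX'c).add (hH.clm_apply hΘc)
  have hPgc : ContinuousOn Pg (Icc (0:ℝ) Tf) := by
    rw [hPgdef]
    exact (hF.norm.mul continuousOn_const).add (hH.norm.mul continuousOn_const)
  -- integrability helper
  have hintg : ∀ (f : ℝ → ℝ), ContinuousOn f (Icc (0:ℝ) Tf) → ∀ r ∈ Icc (0:ℝ) Tf,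
      IntervalIntegrable f MeasureTheory.volume 0 r := by
    intro f hf r hr
    apply ContinuousOn.intervalIntegrable
    rw [uIcc_of_le hr.1]
    exact hf.mono (Icc_subset_Icc le_rfl hr.2)
  -- nonnegativity
  have heE0 : ∀ s, 0 ≤ eE s := by
    intro s
    have h1 := hmco (X' s); have h2 := hmTco (Θ s); have h3 := hapos (X s)
    have h4 : 0 ≤ μ₀ * ‖X' s‖ ^ 2 := by positivity
    have h5 : 0 ≤ μ₁ * ‖Θ s‖ ^ 2 := by positivity
    rw [heEdef]; dsimp only; linarith
  have hmeE : ∀ s, μ₀ * ‖X' s‖ ^ 2 ≤ eE s := by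
    intro s
    have h1 := hmco (X' s); have h2 := hmTco (Θ s); have h3 := hapos (X s)
    have h5 : 0 ≤ μ₁ * ‖Θ s‖ ^ 2 := by positivity
    rw [heEdef]; dsimp only; linarith
  have hmTeE : ∀ s, μ₁ * ‖Θ s‖ ^ 2 ≤ eE s := by
    intro s
    have h1 := hmco (X' s); have h2 := hmTco (Θ s); have h3 := hapos (X s)
    have h4 : 0 ≤ μ₀ * ‖X' s‖ ^ 2 := by positivity
    rw [heEdef]; dsimp only; linarith
  have hD0 : ∀ s, 0 ≤ D s := by
    intro s; rw [hDdef]; exact add_nonneg (hbpos _) (haTpos _)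
  have hPg0 : ∀ s, 0 ≤ Pg s := by
    intro s; rw [hPgdef]; dsimp only
    have := norm_nonneg (F s); have := norm_nonneg (H s)
    have := Real.sqrt_nonneg μ₀; have := Real.sqrt_nonneg μ₁
    positivity
  -- derivative of the energy
  have heder : ∀ s ∈ Icc (0:ℝ) Tf,
      HasDerivWithinAt eE (2 * P s - 2 * D s) (Icc (0:ℝ) Tf) s := by
    intro s hs
    have h1 : HasDerivWithinAt (fun r => m (X' r) (X' r))
        (m (X'' s) (X' s) + m (X' s) (X'' s)) (Icc (0:ℝ) Tf) s :=
      (m.hasFDerivAt.comp_hasDerivWithinAt s (hX' s hs)).clm_apply (hX' s hs)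
    have h2 : HasDerivWithinAt (fun r => mT (Θ r) (Θ r))
        (mT (Θ' s) (Θ s) + mT (Θ s) (Θ' s)) (Icc (0:ℝ) Tf) s :=
      (mT.hasFDerivAt.comp_hasDerivWithinAt s (hΘ s hs)).clm_apply (hΘ s hs)
    have h3 : HasDerivWithinAt (fun r => a (X r) (X r))
        (a (X' s) (X s) + a (X s) (X' s)) (Icc (0:ℝ) Tf) s :=
      (a.hasFDerivAt.comp_hasDerivWithinAt s (hX s hs)).clm_apply (hX s hs)
    have hsum := (h1.add h2).add h3
    have heq := hvar s hs (X' s) (Θ s)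
    have hval : m (X'' s) (X' s) + m (X' s) (X'' s) + (mT (Θ' s) (Θ s) + mT (Θ s) (Θ' s))
        + (a (X' s) (X s) + a (X s) (X' s)) = 2 * P s - 2 * D s := by
      have e1 := hmsym (X'' s) (X' s)
      have e2 := hmTsym (Θ' s) (Θ s)
      have e3 := hasym (X' s) (X s)
      rw [hPdef, hDdef]; dsimp only; linarith
    rw [heEdef]
    exact hval ▸ hsum
  -- derivative of βb
  have hβder : ∀ s ∈ Icc (0:ℝ) Tf,
      HasDerivWithinAt βb (b (X' s) (X s) + b (X s) (X' s)) (Icc (0:ℝ) Tf) s := by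
    intro s hs
    rw [hβdef]
    exact (b.hasFDerivAt.comp_hasDerivWithinAt s (hX s hs)).clm_apply (hX s hs)
  -- fundamental theorem of calculus for the energy
  have hFTCe : ∀ r ∈ Icc (0:ℝ) Tf,
      eE r + ∫ s in (0:ℝ)..r, 2 * D s = eE 0 + ∫ s in (0:ℝ)..r, 2 * P s := by
    intro r hr
    have hintP := hintg (fun s => 2 * P s) (continuousOn_const.mul hPc) r hr
    have hintD := hintg (fun s => 2 * D s) (continuousOn_const.mul hDc) r hr
    have key := intervalIntegral.integral_eq_sub_of_hasDeriv_right_of_le hr.1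
      (heEc.mono (Icc_subset_Icc le_rfl hr.2))
      (fun x hx => (heder x ⟨hx.1.le, hx.2.le.trans hr.2⟩).mono_of_mem_nhdsWithin
        (Icc_mem_nhdsGT_of_mem ⟨hx.1.le, hx.2.trans_le hr.2⟩))
      (hintP.sub hintD)
    rw [intervalIntegral.integral_sub hintP hintD] at key
    linarith
  -- fundamental theorem of calculus for βb
  have hFTCβ : ∀ r ∈ Icc (0:ℝ) Tf,
      (∫ s in (0:ℝ)..r, (b (X' s) (X s) + b (X s) (X' s))) = βb r - βb 0 := by
    intro r hr
    have hint := hintg (fun s => b (X' s) (X s) + b (X s) (X' s))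
      (((b.continuous.comp_continuousOn hX'c).clm_apply hXc).add
        ((b.continuous.comp_continuousOn hXc).clm_apply hX'c)) r hr
    exact intervalIntegral.integral_eq_sub_of_hasDeriv_right_of_le hr.1
      (hβc.mono (Icc_subset_Icc le_rfl hr.2))
      (fun x hx => (hβder x ⟨hx.1.le, hx.2.le.trans hr.2⟩).mono_of_mem_nhdsWithin
        (Icc_mem_nhdsGT_of_mem ⟨hx.1.le, hx.2.trans_le hr.2⟩))
      hint
  -- the function Φ
  set Φ : ℝ → ℝ := fun r => eE r + ∫ s in (0:ℝ)..r, 2 * D s with hΦdef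
  clear_value Φ
  have hΦc : ContinuousOn Φ (Icc (0:ℝ) Tf) := by
    rw [hΦdef]
    refine heEc.add ?_
    have hIO : MeasureTheory.IntegrableOn (fun s => 2 * D s) (uIcc (0:ℝ) Tf) := by
      rw [uIcc_of_le hTf.le]
      exact (continuousOn_const.mul hDc).integrableOn_Icc
    have := intervalIntegral.continuousOn_primitive_interval hIO
    rwa [uIcc_of_le hTf.le] at this
  have hΦ0 : ∀ r ∈ Icc (0:ℝ) Tf, 0 ≤ Φ r := by
    intro r hr
    rw [hΦdef]
    refine add_nonneg (heE0 r) (intervalIntegral.integral_nonneg hr.1 fun u _ => ?_)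
    have := hD0 u; linarith
  have heEleΦ : ∀ r ∈ Icc (0:ℝ) Tf, eE r ≤ Φ r := by
    intro r hr
    rw [hΦdef]
    refine le_add_of_nonneg_right (intervalIntegral.integral_nonneg hr.1 fun u _ => ?_)
    have := hD0 u; linarith
  -- max of Φ on [0, t]
  obtain ⟨s₁, hs₁mem, hs₁max⟩ := isCompact_Icc.exists_isMaxOn (nonempty_Icc.2 ht.1)
    (hΦc.mono (Icc_subset_Icc le_rfl ht.2))
  rw [isMaxOn_iff] at hs₁max
  have hs₁I : s₁ ∈ Icc (0:ℝ) Tf := ⟨hs₁mem.1, hs₁mem.2.trans ht.2⟩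
  set Ns : ℝ := Real.sqrt (Φ s₁) with hNsdef
  clear_value Ns
  have hNs0 : 0 ≤ Ns := by rw [hNsdef]; exact Real.sqrt_nonneg _
  have hNs2 : Ns ^ 2 = Φ s₁ := by rw [hNsdef]; exact Real.sq_sqrt (hΦ0 s₁ hs₁I)
  -- pointwise bound on P
  have hPb : ∀ s ∈ Icc (0:ℝ) s₁, 2 * P s ≤ (2 * Ns) * Pg s := by
    intro s hs
    have hsIt : s ∈ Icc (0:ℝ) t := ⟨hs.1, hs.2.trans hs₁mem.2⟩
    have hsI : s ∈ Icc (0:ℝ) Tf := ⟨hs.1, hsIt.2.trans ht.2⟩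
    have hΦs : Φ s ≤ Ns ^ 2 := by rw [hNs2]; exact hs₁max s hsIt
    have heEs : eE s ≤ Ns ^ 2 := (heEleΦ s hsI).trans hΦs
    have hXn : ‖X' s‖ ≤ Ns * (Real.sqrt μ₀)⁻¹ := by
      have h1 : μ₀ * ‖X' s‖ ^ 2 ≤ Ns ^ 2 := (hmeE s).trans heEs
      have e : (Ns * (Real.sqrt μ₀)⁻¹) ^ 2 = Ns ^ 2 * μ₀⁻¹ := by
        rw [mul_pow, inv_pow, Real.sq_sqrt hμ₀.le]
      calc ‖X' s‖ = Real.sqrt (‖X' s‖ ^ 2) := (Real.sqrt_sq (norm_nonneg _)).symm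
        _ ≤ Real.sqrt ((Ns * (Real.sqrt μ₀)⁻¹) ^ 2) := by
            apply Real.sqrt_le_sqrt
            rw [e, ← div_eq_mul_inv]
            exact (le_div_iff₀ hμ₀).2 (by linarith)
        _ = Ns * (Real.sqrt μ₀)⁻¹ := Real.sqrt_sq (by positivity)
    have hΘn : ‖Θ s‖ ≤ Ns * (Real.sqrt μ₁)⁻¹ := by
      have h1 : μ₁ * ‖Θ s‖ ^ 2 ≤ Ns ^ 2 := (hmTeE s).trans heEs
      have e : (Ns * (Real.sqrt μ₁)⁻¹) ^ 2 = Ns ^ 2 * μ₁⁻¹ := by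
        rw [mul_pow, inv_pow, Real.sq_sqrt hμ₁.le]
      calc ‖Θ s‖ = Real.sqrt (‖Θ s‖ ^ 2) := (Real.sqrt_sq (norm_nonneg _)).symm
        _ ≤ Real.sqrt ((Ns * (Real.sqrt μ₁)⁻¹) ^ 2) := by
            apply Real.sqrt_le_sqrt
            rw [e, ← div_eq_mul_inv]
            exact (le_div_iff₀ hμ₁).2 (by linarith)
        _ = Ns * (Real.sqrt μ₁)⁻¹ := Real.sqrt_sq (by positivity)
    have hFb : F s (X' s) ≤ ‖F s‖ * ‖X' s‖ := by
      refine le_trans (le_abs_self _) ?_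
      rw [← Real.norm_eq_abs]
      exact (F s).le_opNorm (X' s)
    have hHb : H s (Θ s) ≤ ‖H s‖ * ‖Θ s‖ := by
      refine le_trans (le_abs_self _) ?_
      rw [← Real.norm_eq_abs]
      exact (H s).le_opNorm (Θ s)
    have hF2 : ‖F s‖ * ‖X' s‖ ≤ ‖F s‖ * (Ns * (Real.sqrt μ₀)⁻¹) :=
      mul_le_mul_of_nonneg_left hXn (norm_nonneg _)
    have hH2 : ‖H s‖ * ‖Θ s‖ ≤ ‖H s‖ * (Ns * (Real.sqrt μ₁)⁻¹) :=
      mul_le_mul_of_nonneg_left hΘn (norm_nonneg _)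
    rw [hPdef, hPgdef]; dsimp only
    nlinarith [hFb, hHb, hF2, hH2]
  -- the integral of Pg
  set Gg : ℝ := ∫ s in (0:ℝ)..Tf, Pg s with hGgdef
  clear_value Gg
  have hGg0 : 0 ≤ Gg := by
    rw [hGgdef]
    exact intervalIntegral.integral_nonneg hTf.le fun u _ => hPg0 u
  -- quadratic bound on Ns
  have hNb : Ns ≤ Real.sqrt (eE 0) + 2 * Gg := by
    have hΦs₁ := hFTCe s₁ hs₁I
    have hi1 : (∫ s in (0:ℝ)..s₁, 2 * P s) ≤ ∫ s in (0:ℝ)..s₁, (2 * Ns) * Pg s :=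
      intervalIntegral.integral_mono_on hs₁mem.1
        (hintg _ (continuousOn_const.mul hPc) s₁ hs₁I)
        (hintg _ (continuousOn_const.mul hPgc) s₁ hs₁I) hPb
    have hi2 : (∫ s in (0:ℝ)..s₁, (2 * Ns) * Pg s) = (2 * Ns) * ∫ s in (0:ℝ)..s₁, Pg s :=
      intervalIntegral.integral_const_mul _ _
    have hi3 : (∫ s in (0:ℝ)..s₁, Pg s) ≤ Gg := by
      rw [hGgdef]
      exact intervalIntegral.integral_mono_interval le_rfl hs₁mem.1 hs₁I.2
        (MeasureTheory.ae_of_all _ fun u => hPg0 u) (hintg _ hPgc Tf hTmem)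
    have hi4 : (2 * Ns) * (∫ s in (0:ℝ)..s₁, Pg s) ≤ (2 * Ns) * Gg :=
      mul_le_mul_of_nonneg_left hi3 (by positivity)
    have hq : Ns ^ 2 ≤ eE 0 + 2 * Gg * Ns := by
      have hΦval : Φ s₁ = eE s₁ + ∫ s in (0:ℝ)..s₁, 2 * D s := by rw [hΦdef]
      linarith [hNs2, hΦs₁, hi1, hi2, hi4, hΦval]
    exact aux_quad (eE 0) Gg Ns (heE0 0) hGg0 hNs0 hq
  set K : ℝ := Real.sqrt (eE 0) + 2 * Gg with hKdef
  clear_value K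
  have hK0 : 0 ≤ K := by rw [hKdef]; positivity
  have hΦK : ∀ r ∈ Icc (0:ℝ) t, Φ r ≤ K ^ 2 := by
    intro r hr
    have := hs₁max r hr
    nlinarith [hNs2, hNb, hNs0, hK0]
  -- bound on ∫ b(X',X')
  have hbintK : ∀ r ∈ Icc (0:ℝ) t, (∫ s in (0:ℝ)..r, b (X' s) (X' s)) ≤ K ^ 2 / 2 := by
    intro r hr
    have hrI : r ∈ Icc (0:ℝ) Tf := ⟨hr.1, hr.2.trans ht.2⟩
    have h1 : (∫ s in (0:ℝ)..r, 2 * D s) ≤ K ^ 2 := by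
      have h := hΦK r hr
      have h2 := heE0 r
      rw [hΦdef] at h; dsimp only at h; linarith
    have hbc : ContinuousOn (fun s => b (X' s) (X' s)) (Icc (0:ℝ) Tf) :=
      (b.continuous.comp_continuousOn hX'c).clm_apply hX'c
    have h2 : (∫ s in (0:ℝ)..r, 2 * b (X' s) (X' s)) ≤ ∫ s in (0:ℝ)..r, 2 * D s := by
      refine intervalIntegral.integral_mono_on hr.1
        (hintg _ (continuousOn_const.mul hbc) r hrI)
        (hintg _ (continuousOn_const.mul hDc) r hrI) fun u _ => ?_
      have := haTpos (Θ u)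
      rw [hDdef]; dsimp only; linarith
    have h3 : (∫ s in (0:ℝ)..r, 2 * b (X' s) (X' s))
        = 2 * ∫ s in (0:ℝ)..r, b (X' s) (X' s) :=
      intervalIntegral.integral_const_mul _ _
    linarith
  -- max of βb on [0, t]
  obtain ⟨s₂, hs₂mem, hs₂max⟩ := isCompact_Icc.exists_isMaxOn (nonempty_Icc.2 ht.1)
    (hβc.mono (Icc_subset_Icc le_rfl ht.2))
  rw [isMaxOn_iff] at hs₂max
  have hs₂I : s₂ ∈ Icc (0:ℝ) Tf := ⟨hs₂mem.1, hs₂mem.2.trans ht.2⟩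
  have h2Tf : (0:ℝ) < (2 * Tf)⁻¹ := by positivity
  -- pointwise bound for the βb-derivative
  have hcs : ∀ s ∈ Icc (0:ℝ) s₂, b (X' s) (X s) + b (X s) (X' s)
      ≤ (2 * Tf)⁻¹ * βb s₂ + (2 * Tf) * b (X' s) (X' s) := by
    intro s hs
    have h := aux_cs b hbsym hbpos ((2 * Tf)⁻¹) h2Tf (X s) (X' s)
    rw [inv_inv] at h
    have hsym := hbsym (X' s) (X s)
    have hβle : βb s ≤ βb s₂ := hs₂max s ⟨hs.1, hs.2.trans hs₂mem.2⟩
    have hmul : (2 * Tf)⁻¹ * βb s ≤ (2 * Tf)⁻¹ * βb s₂ :=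
      mul_le_mul_of_nonneg_left hβle h2Tf.le
    have hβs : βb s = b (X s) (X s) := by rw [hβdef]
    rw [hβs] at hmul
    linarith
  -- integrate the βb bound
  have hβbound : βb s₂ ≤ 2 * βb 0 + 2 * Tf * K ^ 2 := by
    have hFTC := hFTCβ s₂ hs₂I
    have hbc : ContinuousOn (fun s => b (X' s) (X' s)) (Icc (0:ℝ) Tf) :=
      (b.continuous.comp_continuousOn hX'c).clm_apply hX'c
    have hder_c : ContinuousOn (fun s => b (X' s) (X s) + b (X s) (X' s)) (Icc (0:ℝ) Tf) :=
      ((b.continuous.comp_continuousOn hX'c).clm_apply hXc).add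
        ((b.continuous.comp_continuousOn hXc).clm_apply hX'c)
    have hi1 : (∫ s in (0:ℝ)..s₂, (b (X' s) (X s) + b (X s) (X' s)))
        ≤ ∫ s in (0:ℝ)..s₂, ((2 * Tf)⁻¹ * βb s₂ + (2 * Tf) * b (X' s) (X' s)) := by
      refine intervalIntegral.integral_mono_on hs₂mem.1
        (hintg _ hder_c s₂ hs₂I) ?_ hcs
      exact (intervalIntegrable_const).add
        ((hintg _ hbc s₂ hs₂I).const_mul _)
    have hi2 : (∫ s in (0:ℝ)..s₂, ((2 * Tf)⁻¹ * βb s₂ + (2 * Tf) * b (X' s) (X' s)))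
        = (s₂ - 0) * ((2 * Tf)⁻¹ * βb s₂) + (2 * Tf) * ∫ s in (0:ℝ)..s₂, b (X' s) (X' s) := by
      rw [intervalIntegral.integral_add (intervalIntegrable_const)
        ((hintg _ hbc s₂ hs₂I).const_mul _),
        intervalIntegral.integral_const, intervalIntegral.integral_const_mul, smul_eq_mul]
    have hi3 : (∫ s in (0:ℝ)..s₂, b (X' s) (X' s)) ≤ K ^ 2 / 2 := hbintK s₂ hs₂mem
    have hi4 : (s₂ - 0) * ((2 * Tf)⁻¹ * βb s₂) ≤ βb s₂ / 2 := by
      have hb0 : 0 ≤ βb s₂ := by rw [hβdef]; exact hbpos _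
      have hfrac : (2 * Tf)⁻¹ * s₂ ≤ 1 / 2 := by
        have : (2 * Tf)⁻¹ * Tf = 1 / 2 := by field_simp
        nlinarith [hs₂I.2, h2Tf.le]
      nlinarith [hb0, hfrac, h2Tf.le, hs₂mem.1]
    have hi5 : (2 * Tf) * (∫ s in (0:ℝ)..s₂, b (X' s) (X' s)) ≤ (2 * Tf) * (K ^ 2 / 2) :=
      mul_le_mul_of_nonneg_left hi3 (by positivity)
    nlinarith [hFTC, hi1, hi2, hi4, hi5]
  have hβt : βb t ≤ 2 * βb 0 + 2 * Tf * K ^ 2 :=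
    le_trans (hs₂max t ⟨ht.1, le_rfl⟩) hβbound
  -- bound on the target quantity
  have haTc : ContinuousOn (fun s => aT (Θ s) (Θ s)) (Icc (0:ℝ) Tf) :=
    (aT.continuous.comp_continuousOn hΘc).clm_apply hΘc
  have haTint : (∫ s in (0:ℝ)..t, aT (Θ s) (Θ s)) ≤ ∫ s in (0:ℝ)..t, 2 * D s := by
    refine intervalIntegral.integral_mono_on ht.1
      (hintg _ haTc t ht) (hintg _ (continuousOn_const.mul hDc) t ht) fun u _ => ?_
    have := hbpos (X' u); have := haTpos (Θ u)
    rw [hDdef]; dsimp only; linarith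
  have hmain : eE t + (∫ s in (0:ℝ)..t, aT (Θ s) (Θ s)) ≤ K ^ 2 := by
    have h1 := hΦK t ⟨ht.1, le_rfl⟩
    rw [hΦdef] at h1; dsimp only at h1
    linarith
  -- relate to the statement's quantities
  set E0 : ℝ := m (X' 0) (X' 0) + mT (Θ 0) (Θ 0) + a (X 0) (X 0) + b (X 0) (X 0) with hE0def
  set Itot : ℝ := ∫ s in (0:ℝ)..Tf, (‖F s‖ + ‖H s‖) with hItotdef
  clear_value E0 Itot
  have hE0eq : E0 = eE 0 + βb 0 := by rw [hE0def, heEdef, hβdef]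
  have hE00 : 0 ≤ E0 := by
    rw [hE0eq]
    have := heE0 0
    have : 0 ≤ βb 0 := by rw [hβdef]; exact hbpos _
    have := heE0 0
    linarith
  have hItot0 : 0 ≤ Itot := by
    rw [hItotdef]
    refine intervalIntegral.integral_nonneg hTf.le fun u _ => ?_
    positivity
  set R : ℝ := Real.sqrt E0 + Itot with hRdef
  clear_value R
  have hR0 : 0 ≤ R := by rw [hRdef]; positivity
  have hsE0R : Real.sqrt E0 ≤ R := by rw [hRdef]; linarith
  have hItotR : Itot ≤ R := by
    rw [hRdef]; have := Real.sqrt_nonneg E0; linarith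
  have hsqrtE : Real.sqrt (eE 0) ≤ Real.sqrt E0 := by
    apply Real.sqrt_le_sqrt
    rw [hE0eq]
    have : 0 ≤ βb 0 := by rw [hβdef]; exact hbpos _
    linarith
  -- Gg ≤ cmax * Itot
  have hGgI : Gg ≤ cmax * Itot := by
    have h1 : (∫ s in (0:ℝ)..Tf, Pg s) ≤ ∫ s in (0:ℝ)..Tf, cmax * (‖F s‖ + ‖H s‖) := by
      refine intervalIntegral.integral_mono_on hTf.le (hintg _ hPgc Tf hTmem)
        ((hintg _ ((hF.norm.add hH.norm)) Tf hTmem).const_mul _) fun u _ => ?_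
      have hm1 : (Real.sqrt μ₀)⁻¹ ≤ cmax := by rw [hcmax_def]; exact le_max_left _ _
      have hm2 : (Real.sqrt μ₁)⁻¹ ≤ cmax := by rw [hcmax_def]; exact le_max_right _ _
      have hFn := norm_nonneg (F u); have hHn := norm_nonneg (H u)
      rw [hPgdef]; dsimp only
      nlinarith [mul_le_mul_of_nonneg_left hm1 hFn, mul_le_mul_of_nonneg_left hm2 hHn]
    rw [hGgdef, hItotdef]
    rwa [intervalIntegral.integral_const_mul] at h1
  have hKR : K ≤ (1 + 2 * cmax) * R := by
    have h1 : K ≤ Real.sqrt E0 + 2 * (cmax * Itot) := by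
      rw [hKdef]; linarith [hsqrtE, hGgI]
    have h2 : Real.sqrt E0 + 2 * (cmax * Itot) ≤ (1 + 2 * cmax) * R := by
      have := mul_nonneg hcmax0 (Real.sqrt_nonneg E0)
      nlinarith [hItot0, hsE0R, hItotR, hcmax0]
    linarith
  have hβ0R : βb 0 ≤ R ^ 2 := by
    have h1 : βb 0 ≤ E0 := by
      rw [hE0eq]; linarith [heE0 0]
    have h2 : E0 = (Real.sqrt E0) ^ 2 := (Real.sq_sqrt hE00).symm
    nlinarith [hsE0R, Real.sqrt_nonneg E0, hR0]
  have hKsq : K ^ 2 ≤ (1 + 2 * cmax) ^ 2 * R ^ 2 := by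
    nlinarith [hKR, hK0, hR0, hcmax0]
  -- final assembly
  have hLHS : (m (X' t) (X' t) + mT (Θ t) (Θ t) + a (X t) (X t) + b (X t) (X t))
      + (∫ s in (0:ℝ)..t, aT (Θ s) (Θ s))
      ≤ ((1 + 2*Tf) * (1 + 2*cmax)^2 + 2) * R ^ 2 := by
    have hsplit : m (X' t) (X' t) + mT (Θ t) (Θ t) + a (X t) (X t) + b (X t) (X t)
        = eE t + βb t := by rw [heEdef, hβdef]
    rw [hsplit]
    have h1 := hmain
    have h2 := hβt
    have h3 := hβ0R
    have h4 := hKsq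
    nlinarith [hTf.le, hK0, sq_nonneg K, sq_nonneg R]
  calc Real.sqrt ((m (X' t) (X' t) + mT (Θ t) (Θ t) + a (X t) (X t) + b (X t) (X t))
          + ∫ s in (0:ℝ)..t, aT (Θ s) (Θ s))
      ≤ Real.sqrt (((1 + 2*Tf) * (1 + 2*cmax)^2 + 2) * R ^ 2) := Real.sqrt_le_sqrt hLHS
    _ = Real.sqrt ((1 + 2*Tf) * (1 + 2*cmax)^2 + 2) * R := by
        rw [Real.sqrt_mul hCsq.le, Real.sqrt_sq hR0]
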